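/- Fix integers d ≥ 1 and a real b ≥ 2. For a subset T ⊆ {1,…,d} with s = #T, define f_T : ℝ^d → ℝ by f_T(y) = (y₁ + ⋯ + y_s) − b·∑_{t∈T} y_{d+1−t} − s(d−s) + b·( ∑_{t∈T} t − s(s+1)/2 ). Suppose y = (y₁,…,y_d) ∈ ℝ^d satisfies y₁ + ⋯ + y_d = 0 and f_T(y) ≥ 0 for every proper subset T ⊊ {1,…,d}. Then for all integers 0 ≤ m < n ≤ d, −m(n−m) ≤ y_{m+1} + y_{m+2} + ⋯ + y_n ≤ (n−m)(d−n). -/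

import Mathlib

/-- The affine functional `f_T(y) = (y₁+⋯+y_s) − b·∑_{t∈T} y_{d+1−t} − s(d−s)
+ b·(∑_{t∈T} t − s(s+1)/2)`, where `s = #T`. -/
noncomputable def fT (d : ℕ) (b : ℝ) (T : Finset ℕ) (y : ℕ → ℝ) : ℝ :=
  (∑ i ∈ Finset.Icc 1 T.card, y i) - b * ∑ t ∈ T, y (d + 1 - t)
    - T.card * ((d : ℝ) - T.card)
    + b * ((∑ t ∈ T, (t : ℝ)) - T.card * (T.card + 1) / 2)

lemma gauss0 (N : ℕ) : ∑ t ∈ Finset.Ioc 0 N, (t : ℝ) = N * (N + 1) / 2 := by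
  induction N with
  | zero => simp
  | succ k ih =>
    rw [← Finset.sum_Ioc_consecutive _ (Nat.zero_le k) (Nat.le_succ k),
      Nat.Ioc_succ_singleton, Finset.sum_singleton, ih]
    push_cast; ring

lemma gaussIoc (a c : ℕ) (h : a ≤ c) :
    ∑ t ∈ Finset.Ioc a c, (t : ℝ) = ((c:ℝ) * (c + 1) - (a:ℝ) * (a + 1)) / 2 := by
  have := Finset.sum_Ioc_consecutive (fun t => (t : ℝ)) (Nat.zero_le a) h
  have h1 := gauss0 a
  have h2 := gauss0 c
  linarith

lemma sum_reflect (y : ℕ → ℝ) (d a c : ℕ) (hc : c ≤ d) :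
    ∑ t ∈ Finset.Ioc a c, y (d + 1 - t) = ∑ i ∈ Finset.Ioc (d - c) (d - a), y i := by
  refine Finset.sum_nbij' (fun t => d + 1 - t) (fun i => d + 1 - i) ?_ ?_ ?_ ?_ ?_
  · intro t ht; simp only [Finset.mem_Ioc] at *; omega
  · intro i hi; simp only [Finset.mem_Ioc] at *; omega
  · intro t ht; simp only [Finset.mem_Ioc] at ht; omega
  · intro i hi; simp only [Finset.mem_Ioc] at hi; omega
  · intro t ht; rfl

lemma Icc_one (k : ℕ) : Finset.Icc 1 k = Finset.Ioc 0 k := by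
  ext x; simp only [Finset.mem_Icc, Finset.mem_Ioc]; omega

lemma nonneg_of_mul_b (b X : ℝ) (hb : 2 ≤ b) (h : 0 ≤ b * X) : 0 ≤ X := by
  nlinarith

lemma prefix_le (d : ℕ) (hd : 1 ≤ d) (b : ℝ) (hb : 2 ≤ b) (y : ℕ → ℝ)
    (hsum : ∑ i ∈ Finset.Icc 1 d, y i = 0)
    (hfT : ∀ T ⊆ Finset.Icc 1 d, T ≠ Finset.Icc 1 d → 0 ≤ fT d b T y)
    (k : ℕ) (hk : k ≤ d) :
    ∑ i ∈ Finset.Ioc 0 k, y i ≤ (k : ℝ) * ((d : ℝ) - k) := by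
  rcases eq_or_lt_of_le hk with rfl | hk
  · rw [Icc_one] at hsum
    rw [hsum]
    have : (k:ℝ) - k = 0 := by ring
    rw [this, mul_zero]
  · set T : Finset ℕ := Finset.Ioc (d - k) d with hT
    have hTsub : T ⊆ Finset.Icc 1 d := by
      intro t ht; simp only [hT, Finset.mem_Ioc, Finset.mem_Icc] at *; omega
    have hTne : T ≠ Finset.Icc 1 d := by
      intro h
      apply_fun Finset.card at h
      rw [hT, Nat.card_Ioc, Nat.card_Icc] at h
      omega
    have h0 := hfT T hTsub hTne
    have hcard : T.card = k := by rw [hT, Nat.card_Ioc]; omega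
    unfold fT at h0
    rw [hcard] at h0
    have h1 : ∑ t ∈ T, y (d + 1 - t) = ∑ i ∈ Finset.Ioc 0 k, y i := by
      rw [hT, sum_reflect y d (d - k) d le_rfl]
      have e1 : d - d = 0 := by omega
      have e2 : d - (d - k) = k := by omega
      rw [e1, e2]
    have h2 : ∑ t ∈ T, (t : ℝ)
        = ((d:ℝ) * ((d:ℝ) + 1) - ((d:ℝ) - k) * (((d:ℝ) - k) + 1)) / 2 := by
      rw [hT, gaussIoc (d - k) d (by omega)]
      rw [Nat.cast_sub hk.le]
    rw [Icc_one, h1, h2] at h0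
    have key : 0 ≤ (b - 1) * ((k:ℝ) * ((d:ℝ) - k) - ∑ i ∈ Finset.Ioc 0 k, y i) := by
      nlinarith [h0]
    nlinarith [key]

/-- Bounds for consecutive coordinate sums of a point of the polytope
`{y : ∑ y_i = 0, f_T(y) ≥ 0 for all T ⊊ {1,…,d}}`:
`−m(n−m) ≤ y_{m+1} + ⋯ + y_n ≤ (n−m)(d−n)` for `0 ≤ m < n ≤ d`. -/
theorem sum_bounds_of_mem_polytope (d : ℕ) (hd : 1 ≤ d) (b : ℝ) (hb : 2 ≤ b)
    (y : ℕ → ℝ) (hsum : ∑ i ∈ Finset.Icc 1 d, y i = 0)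
    (hfT : ∀ T ⊆ Finset.Icc 1 d, T ≠ Finset.Icc 1 d → 0 ≤ fT d b T y)
    (m n : ℕ) (hmn : m < n) (hnd : n ≤ d) :
    -((m : ℝ) * ((n : ℝ) - m)) ≤ ∑ i ∈ Finset.Icc (m + 1) n, y i ∧
      ∑ i ∈ Finset.Icc (m + 1) n, y i ≤ ((n : ℝ) - m) * ((d : ℝ) - n) := by
  have hIccmn : Finset.Icc (m + 1) n = Finset.Ioc m n := by
    ext x; simp only [Finset.mem_Icc, Finset.mem_Ioc]; omega
  rw [hIccmn]
  have hmd : m ≤ d := by omega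
  have hsum0 : ∑ i ∈ Finset.Ioc 0 d, y i = 0 := by rw [← Icc_one]; exact hsum
  have hsplit : (∑ i ∈ Finset.Ioc 0 m, y i) + (∑ i ∈ Finset.Ioc m n, y i)
      + (∑ i ∈ Finset.Ioc n d, y i) = 0 := by
    have h1 := Finset.sum_Ioc_consecutive y (Nat.zero_le m) hmn.le
    have h2 := Finset.sum_Ioc_consecutive y (Nat.zero_le n) hnd
    linarith
  constructor
  · -- lower bound
    have hdisj : Disjoint (Finset.Ioc 0 (d - n)) (Finset.Ioc (d - m) d) := by
      rw [Finset.disjoint_left]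
      intro x hx hx'
      simp only [Finset.mem_Ioc] at hx hx'
      omega
    set T : Finset ℕ := Finset.Ioc 0 (d - n) ∪ Finset.Ioc (d - m) d with hT
    have hTsub : T ⊆ Finset.Icc 1 d := by
      intro t ht
      simp only [hT, Finset.mem_union, Finset.mem_Ioc, Finset.mem_Icc] at *
      omega
    have hcard : T.card = d - n + m := by
      rw [hT, Finset.card_union_of_disjoint hdisj, Nat.card_Ioc, Nat.card_Ioc]
      omega
    have hTne : T ≠ Finset.Icc 1 d := by
      intro h
      apply_fun Finset.card at h
      rw [hcard, Nat.card_Icc] at h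
      omega
    have h0 := hfT T hTsub hTne
    unfold fT at h0
    rw [hcard] at h0
    have hy : ∑ t ∈ T, y (d + 1 - t)
        = (∑ i ∈ Finset.Ioc n d, y i) + ∑ i ∈ Finset.Ioc 0 m, y i := by
      rw [hT, Finset.sum_union hdisj, sum_reflect y d 0 (d - n) (by omega),
        sum_reflect y d (d - m) d le_rfl]
      have e1 : d - (d - n) = n := by omega
      have e2 : d - 0 = d := by omega
      have e3 : d - d = 0 := by omega
      have e4 : d - (d - m) = m := by omega
      rw [e1, e2, e3, e4]
    have ht : ∑ t ∈ T, (t : ℝ)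
        = ((d:ℝ) - n) * (((d:ℝ) - n) + 1) / 2
          + ((d:ℝ) * ((d:ℝ) + 1) - ((d:ℝ) - m) * (((d:ℝ) - m) + 1)) / 2 := by
      rw [hT, Finset.sum_union hdisj, gauss0, gaussIoc (d - m) d (by omega),
        Nat.cast_sub hnd, Nat.cast_sub hmd]
    have c3 : ((d - n + m : ℕ) : ℝ) = (d:ℝ) - n + m := by
      rw [Nat.cast_add, Nat.cast_sub hnd]
    rw [Icc_one, hy, ht, c3] at h0
    have hPs := prefix_le d hd b hb y hsum hfT (d - n + m) (by omega)
    rw [c3] at hPs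
    have key : 0 ≤ b * ((∑ i ∈ Finset.Ioc m n, y i) + (m:ℝ) * ((n:ℝ) - m)) := by
      nlinarith [h0, hPs, hsplit]
    have := nonneg_of_mul_b b _ hb key
    linarith
  · -- upper bound
    by_cases hcase : m = 0 ∧ n = d
    · obtain ⟨rfl, rfl⟩ := hcase
      rw [show Finset.Ioc 0 n = Finset.Ioc 0 n from rfl] at hsum0
      rw [hsum0]
      push_cast
      nlinarith []
    · set T : Finset ℕ := Finset.Ioc (d - n) (d - m) with hT
      have hTsub : T ⊆ Finset.Icc 1 d := by
        intro t ht
        simp only [hT, Finset.mem_Ioc, Finset.mem_Icc] at *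
        omega
      have hcard : T.card = n - m := by rw [hT, Nat.card_Ioc]; omega
      have hTne : T ≠ Finset.Icc 1 d := by
        intro h
        apply_fun Finset.card at h
        rw [hcard, Nat.card_Icc] at h
        omega
      have h0 := hfT T hTsub hTne
      unfold fT at h0
      rw [hcard] at h0
      have hy : ∑ t ∈ T, y (d + 1 - t) = ∑ i ∈ Finset.Ioc m n, y i := by
        rw [hT, sum_reflect y d (d - n) (d - m) (by omega)]
        have e1 : d - (d - m) = m := by omega
        have e2 : d - (d - n) = n := by omega
        rw [e1, e2]
      have ht : ∑ t ∈ T, (t : ℝ)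
          = (((d:ℝ) - m) * (((d:ℝ) - m) + 1) - ((d:ℝ) - n) * (((d:ℝ) - n) + 1)) / 2 := by
        rw [hT, gaussIoc (d - n) (d - m) (by omega), Nat.cast_sub hnd, Nat.cast_sub hmd]
      have cnm : ((n - m : ℕ) : ℝ) = (n:ℝ) - m := Nat.cast_sub hmn.le
      rw [Icc_one, hy, ht, cnm] at h0
      have hPs := prefix_le d hd b hb y hsum hfT (n - m) (by omega)
      rw [cnm] at hPs
      have key : 0 ≤ b * (((n:ℝ) - m) * ((d:ℝ) - n) - ∑ i ∈ Finset.Ioc m n, y i) := by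
        nlinarith [h0, hPs]
      have := nonneg_of_mul_b b _ hb key
      linarith
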